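/- Let $b > 0$, $p = e^b$, $q = p/(p-1)$, $C_b = p^{1-q}/q$. Let $\mu_0, \mu_1$ be probability measures on a measurable space with $\mu_1 \ll \mu_0$ and density $\varrho = d\mu_1/d\mu_0$. Then for every measurable $\varphi_0 > 0$ bounded and bounded away from $0$, and any $\varphi_1$ satisfying $\varphi_1 \le \varphi_0^{1/p}$ pointwise, we have $\int \varphi_1 \, d\mu_1 - \int \varphi_0 \, d\mu_0 \le C_b \int \varrho^q \, d\mu_0$. -/

import Mathlib

open MeasureTheory

lemma young_aux {p q Cb x z : ℝ} (hpq : p.HolderConjugate q) (hCb : Cb = p ^ (1 - q) / q)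
    (hx : 0 ≤ x) (hz : 0 ≤ z) : x ^ (1 / p) * z - x ≤ Cb * z ^ q := by
  have hp0 : 0 < p := hpq.pos
  have hq0 : 0 < q := hpq.symm.pos
  have hpp : (0:ℝ) < p ^ (1 / p) := Real.rpow_pos_of_pos hp0 _
  have key := Real.young_inequality_of_nonneg
    (a := (p * x) ^ (1 / p)) (b := z * (p ^ (1 / p))⁻¹)
    (Real.rpow_nonneg (mul_nonneg hp0.le hx) _)
    (mul_nonneg hz (inv_nonneg.2 hpp.le)) hpq
  have e1 : ((p * x) ^ (1 / p)) ^ p = p * x := by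
    rw [← Real.rpow_mul (mul_nonneg hp0.le hx), one_div_mul_cancel hp0.ne', Real.rpow_one]
  have hexp : -(1 / p) * q = 1 - q := by
    have s := hpq.sub_one_mul_conj
    field_simp
    nlinarith [s]
  have e3 : (z * (p ^ (1 / p))⁻¹) ^ q = z ^ q * p ^ (1 - q) := by
    rw [Real.mul_rpow hz (inv_nonneg.2 hpp.le), ← Real.rpow_neg hp0.le,
      ← Real.rpow_mul hp0.le, hexp]
  have e2 : (p * x) ^ (1 / p) = p ^ (1 / p) * x ^ (1 / p) := Real.mul_rpow hp0.le hx
  rw [e1, e2, e3] at key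
  have lhs_eq : p ^ (1 / p) * x ^ (1 / p) * (z * (p ^ (1 / p))⁻¹) = x ^ (1 / p) * z := by
    field_simp
  rw [lhs_eq] at key
  have hx' : p * x / p = x := mul_div_cancel_left₀ x hp0.ne'
  have hc : Cb * z ^ q = z ^ q * p ^ (1 - q) / q := by rw [hCb]; ring
  rw [hc]
  nlinarith [key, hx']

/-- Upper-bound half of Proposition 5.10: if `μ1 ≪ μ0` with density `ϱ`, `φ0` is
bounded and bounded away from `0`, and `φ1 ≤ φ0^{1/p}` pointwise, then
`∫ φ1 dμ1 - ∫ φ0 dμ0 ≤ C_b ∫ ϱ^q dμ0`. -/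
theorem stmt_8 {X : Type*} [MeasurableSpace X]
    (μ0 μ1 : Measure X) [IsProbabilityMeasure μ0] [IsProbabilityMeasure μ1]
    (hac : μ1 ≪ μ0)
    (b p q Cb : ℝ) (hb : 0 < b) (hp : p = Real.exp b) (hq : q = p / (p - 1))
    (hCb : Cb = p ^ (1 - q) / q)
    (φ0 φ1 : X → ℝ) (hφ0_meas : Measurable φ0) (hφ1_meas : Measurable φ1)
    (ε M : ℝ) (hε : 0 < ε) (hφ0_lb : ∀ z, ε ≤ φ0 z) (hφ0_ub : ∀ z, φ0 z ≤ M)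
    (hφ1_int : Integrable φ1 μ1)
    (h1 : ∀ z, φ1 z ≤ (φ0 z) ^ (1 / p)) :
    ENNReal.ofReal ((∫ z, φ1 z ∂μ1) - ∫ z, φ0 z ∂μ0) ≤
      ENNReal.ofReal Cb * ∫⁻ z, (μ1.rnDeriv μ0 z) ^ q ∂μ0 := by
  have hp1 : 1 < p := by rw [hp]; exact Real.one_lt_exp_iff.2 hb
  have hpq : p.HolderConjugate q := hq ▸ Real.HolderConjugate.conjExponent hp1
  have hp0 : 0 < p := hpq.pos
  have hq0 : 0 < q := hpq.symm.pos
  have hCb0 : 0 < Cb := by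
    rw [hCb]; exact div_pos (Real.rpow_pos_of_pos hp0 _) hq0
  set ρ : X → ℝ := fun z => (μ1.rnDeriv μ0 z).toReal with hρdef
  have hρ_meas : Measurable ρ := (Measure.measurable_rnDeriv μ1 μ0).ennreal_toReal
  have hρ_nn : ∀ z, 0 ≤ ρ z := fun z => ENNReal.toReal_nonneg
  have hρq_nn : ∀ z, 0 ≤ ρ z ^ q := fun z => Real.rpow_nonneg (hρ_nn z) q
  by_cases htop : ∫⁻ z, (μ1.rnDeriv μ0 z) ^ q ∂μ0 = ⊤
  · rw [htop, ENNReal.mul_top (ENNReal.ofReal_pos.2 hCb0).ne']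
    exact le_top
  have hLeq : ∫⁻ z, (μ1.rnDeriv μ0 z) ^ q ∂μ0 = ∫⁻ z, ENNReal.ofReal (ρ z ^ q) ∂μ0 := by
    refine lintegral_congr_ae ?_
    filter_upwards [Measure.rnDeriv_ne_top μ1 μ0] with z hz
    rw [← ENNReal.ofReal_rpow_of_nonneg (hρ_nn z) hq0.le, ENNReal.ofReal_toReal hz]
  have hρq_int : Integrable (fun z => ρ z ^ q) μ0 := by
    refine ⟨(hρ_meas.pow_const q).aestronglyMeasurable, ?_⟩
    rw [hasFiniteIntegral_iff_ofReal (Filter.Eventually.of_forall hρq_nn)]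
    rw [hLeq] at htop
    exact lt_top_iff_ne_top.2 htop
  have hρ_int : Integrable ρ μ0 := Measure.integrable_toReal_rnDeriv
  have hφ0_pos : ∀ z, 0 < φ0 z := fun z => lt_of_lt_of_le hε (hφ0_lb z)
  have hφ0_int : Integrable φ0 μ0 := by
    refine Integrable.mono' (integrable_const M) hφ0_meas.aestronglyMeasurable
      (Filter.Eventually.of_forall fun z => ?_)
    rw [Real.norm_eq_abs, abs_of_pos (hφ0_pos z)]; exact hφ0_ub z
  have hφ0p_meas : Measurable (fun z => φ0 z ^ (1/p)) := hφ0_meas.pow_const _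
  have hbd : ∀ z, ‖φ0 z ^ (1/p)‖ ≤ M ^ (1/p) := fun z => by
    rw [Real.norm_eq_abs, abs_of_nonneg (Real.rpow_nonneg (hφ0_pos z).le _)]
    exact Real.rpow_le_rpow (hφ0_pos z).le (hφ0_ub z) (by positivity)
  have hφ0p_int1 : Integrable (fun z => φ0 z ^ (1/p)) μ1 :=
    Integrable.mono' (integrable_const _) hφ0p_meas.aestronglyMeasurable
      (Filter.Eventually.of_forall hbd)
  have hg_int : Integrable (fun z => φ0 z ^ (1/p) * ρ z) μ0 :=
    hρ_int.bdd_mul hφ0p_meas.aestronglyMeasurable (Filter.Eventually.of_forall hbd)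
  have step1 : ∫ z, φ1 z ∂μ1 ≤ ∫ z, φ0 z ^ (1/p) ∂μ1 :=
    integral_mono hφ1_int hφ0p_int1 h1
  have step2 : ∫ z, φ0 z ^ (1/p) ∂μ1 = ∫ z, φ0 z ^ (1/p) * ρ z ∂μ0 := by
    rw [← integral_rnDeriv_smul hac (f := fun z => φ0 z ^ (1/p))]
    exact integral_congr_ae (Filter.Eventually.of_forall fun z => by
      simp [smul_eq_mul, mul_comm, hρdef])
  have step4 : ∫ z, (φ0 z ^ (1/p) * ρ z - φ0 z) ∂μ0 ≤ ∫ z, Cb * ρ z ^ q ∂μ0 :=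
    integral_mono (hg_int.sub hφ0_int) (hρq_int.const_mul Cb)
      (fun z => young_aux hpq hCb (hφ0_pos z).le (hρ_nn z))
  have esub : ∫ z, (φ0 z ^ (1/p) * ρ z - φ0 z) ∂μ0
      = (∫ z, φ0 z ^ (1/p) * ρ z ∂μ0) - ∫ z, φ0 z ∂μ0 := integral_sub hg_int hφ0_int
  have emul : ∫ z, Cb * ρ z ^ q ∂μ0 = Cb * ∫ z, ρ z ^ q ∂μ0 :=
    integral_const_mul Cb _
  have hreal : (∫ z, φ1 z ∂μ1) - ∫ z, φ0 z ∂μ0 ≤ Cb * ∫ z, ρ z ^ q ∂μ0 := by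
    linarith [step1, step2, step4, esub, emul]
  calc ENNReal.ofReal ((∫ z, φ1 z ∂μ1) - ∫ z, φ0 z ∂μ0)
      ≤ ENNReal.ofReal (Cb * ∫ z, ρ z ^ q ∂μ0) := ENNReal.ofReal_le_ofReal hreal
    _ = ENNReal.ofReal Cb * ENNReal.ofReal (∫ z, ρ z ^ q ∂μ0) := ENNReal.ofReal_mul hCb0.le
    _ = ENNReal.ofReal Cb * ∫⁻ z, ENNReal.ofReal (ρ z ^ q) ∂μ0 := by
        rw [ofReal_integral_eq_lintegral_ofReal hρq_int (Filter.Eventually.of_forall hρq_nn)]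
    _ = ENNReal.ofReal Cb * ∫⁻ z, (μ1.rnDeriv μ0 z) ^ q ∂μ0 := by rw [← hLeq]
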